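/- arXiv:2511.19003 — 2 statements merged into one kernel-verified Lean document; each statement's English description precedes it below -/
import Mathlib

section
/- For any real s, t with 0 ≤ s < 1 and any c > 0, the identity ∑_{a∈ℤ} e^{-(a-s)²/c + 2at} = √(πc) ∑_{ξ∈ℤ} e^{-2πiξs + 2ts + c(t-πiξ)²} holds, where both sides converge absolutely. -/
open Real Complex

lemma summable_rexp_quad {A : ℝ} (hA : A < 0) (B : ℝ) :
    Summable (fun n : ℤ ↦ Real.exp (A * (n : ℝ) ^ 2 + B * n)) := by
  refine (summable_pow_mul_jacobiTheta₂_term_bound (|B| / (2 * π)) (T := -A / π)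
    (div_pos (neg_pos.mpr hA) Real.pi_pos) 0).of_nonneg_of_le
    (fun n ↦ (Real.exp_pos _).le) (fun n ↦ ?_)
  rw [pow_zero, one_mul, Real.exp_le_exp]
  have hπ : (0:ℝ) < π := Real.pi_pos
  have h : -π * (-A / π * (n:ℝ) ^ 2 - 2 * (|B| / (2 * π)) * |(n:ℝ)|)
      = A * (n:ℝ) ^ 2 + |B| * |(n:ℝ)| := by
    field_simp
    ring
  push_cast
  rw [h]
  have : B * (n:ℝ) ≤ |B| * |(n:ℝ)| := (le_abs_self _).trans (abs_mul B n).le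
  linarith

lemma summable_rexp_quad' {A : ℝ} (hA : A < 0) (B C : ℝ) :
    Summable (fun n : ℤ ↦ Real.exp (A * (n : ℝ) ^ 2 + B * n + C)) := by
  simpa [Real.exp_add] using (summable_rexp_quad hA B).mul_right (Real.exp C)

/-- Poisson summation for the Gaussian-type function `g(a) = e^{-(a-s)²/c + 2at}`:
for `0 ≤ s < 1` and `c > 0`,
`∑_{a∈ℤ} e^{-(a-s)²/c + 2at} = √(πc) ∑_{ξ∈ℤ} e^{-2πiξs + 2ts + c(t-πiξ)²}`,
both sides converging absolutely. -/
theorem poisson_summation_gaussian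
    (s t c : ℝ) (hs : 0 ≤ s) (hs1 : s < 1) (hc : 0 < c) :
    Summable (fun a : ℤ => Real.exp (-((a : ℝ) - s) ^ 2 / c + 2 * a * t)) ∧
    Summable (fun ξ : ℤ => Complex.exp
      (-2 * Real.pi * Complex.I * ξ * s + 2 * t * s + c * (t - Real.pi * Complex.I * ξ) ^ 2)) ∧
    ((∑' a : ℤ, Real.exp (-((a : ℝ) - s) ^ 2 / c + 2 * a * t) : ℝ) : ℂ)
      = (Real.sqrt (Real.pi * c) : ℂ) *
        ∑' ξ : ℤ, Complex.exp
          (-2 * Real.pi * Complex.I * ξ * s + 2 * t * s + c * (t - Real.pi * Complex.I * ξ) ^ 2) := by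
  have hπ : (0:ℝ) < π := Real.pi_pos
  have hπc : (0:ℝ) < π * c := mul_pos hπ hc
  have hcne : (c:ℂ) ≠ 0 := Complex.ofReal_ne_zero.mpr hc.ne'
  have hπne : ((π:ℝ):ℂ) ≠ 0 := Complex.ofReal_ne_zero.mpr hπ.ne'
  -- normal form of the right-hand exponent
  have hnf : ∀ n : ℤ, (-2 * (Real.pi : ℂ) * Complex.I * (n : ℂ) * (s : ℂ) + 2 * (t : ℂ) * (s : ℂ)
        + (c : ℂ) * ((t : ℂ) - (Real.pi : ℂ) * Complex.I * (n : ℂ)) ^ 2)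
      = ((-(π^2*c) * (n:ℝ)^2 + 0 * (n:ℝ) + (2*t*s + c*t^2) : ℝ) : ℂ)
        + ((-2*π*(n:ℝ)*s - 2*π*c*t*(n:ℝ) : ℝ) : ℂ) * Complex.I := by
    intro n
    push_cast
    ring_nf
    simp only [Complex.I_sq]
    ring
  -- first summability
  have h1 : Summable (fun a : ℤ => Real.exp (-((a : ℝ) - s) ^ 2 / c + 2 * a * t)) := by
    have hA : (-1/c : ℝ) < 0 := by
      rw [neg_div, neg_lt_zero]; positivity
    refine (summable_rexp_quad' hA (2*s/c + 2*t) (-s^2/c)).congr (fun n ↦ ?_)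
    congr 1
    field_simp
    ring
  -- second summability
  have h2 : Summable (fun ξ : ℤ => Complex.exp
      (-2 * Real.pi * Complex.I * ξ * s + 2 * t * s + c * (t - Real.pi * Complex.I * ξ) ^ 2)) := by
    apply Summable.of_norm
    have hA : (-(π^2*c) : ℝ) < 0 := by
      rw [neg_lt_zero]; positivity
    refine (summable_rexp_quad' hA 0 (2*t*s + c*t^2)).congr (fun n ↦ ?_)
    rw [hnf n, Complex.norm_exp]
    congr 1
    simp only [Complex.add_re, Complex.mul_re, Complex.ofReal_re, Complex.ofReal_im,
      Complex.I_re, Complex.I_im, mul_zero, zero_mul, mul_one, sub_zero, zero_sub,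
      add_zero, neg_zero]
  refine ⟨h1, h2, ?_⟩
  -- main identity
  set a0 : ℂ := ((1/(π*c) : ℝ) : ℂ) with ha0
  have ha : 0 < a0.re := by rw [ha0, Complex.ofReal_re]; positivity
  set b0 : ℂ := (((s/c + t)/π : ℝ) : ℂ) with hb0
  have key := Complex.tsum_exp_neg_quadratic ha b0
  have hterm : ∀ n : ℤ, ((Real.exp (-((n : ℝ) - s) ^ 2 / c + 2 * n * t) : ℝ) : ℂ)
      = Complex.exp ((-s^2/c : ℝ)) * Complex.exp (-π * a0 * (n:ℂ) ^ 2 + 2 * π * b0 * n) := by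
    intro n
    rw [Complex.ofReal_exp, ← Complex.exp_add]
    congr 1
    rw [ha0, hb0]
    push_cast
    field_simp
    ring
  have hdiv : -(π:ℂ) / a0 = -((π:ℂ)^2 * c) := by
    rw [ha0]; push_cast; field_simp
  have hterm2 : ∀ n : ℤ, Complex.exp ((-s^2/c : ℝ)) * Complex.exp (-π / a0 * ((n:ℂ) + I * b0) ^ 2)
      = Complex.exp (-2 * Real.pi * Complex.I * n * s + 2 * t * s
          + c * (t - Real.pi * Complex.I * n) ^ 2) := by
    intro n
    rw [← Complex.exp_add]
    congr 1
    rw [hdiv, hb0]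
    push_cast
    field_simp
    ring_nf
    simp only [Complex.I_sq]
    ring
  have hsqrt : 1 / a0 ^ (1/2 : ℂ) = ((Real.sqrt (π * c) : ℝ) : ℂ) := by
    have hr : ((1/(π*c)) : ℝ) ^ ((1:ℝ)/2) = (Real.sqrt (π*c))⁻¹ := by
      rw [← Real.sqrt_eq_rpow, one_div, Real.sqrt_inv]
    rw [ha0, show (1/2 : ℂ) = (((1:ℝ)/2 : ℝ) : ℂ) by norm_num,
      ← Complex.ofReal_cpow (by positivity) ((1:ℝ)/2), hr]
    rw [Complex.ofReal_inv, one_div, inv_inv]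
  calc ((∑' a : ℤ, Real.exp (-((a : ℝ) - s) ^ 2 / c + 2 * a * t) : ℝ) : ℂ)
      = ∑' n : ℤ, (Complex.exp ((-s^2/c : ℝ)) * Complex.exp (-π * a0 * (n:ℂ) ^ 2 + 2 * π * b0 * n)) := by
        rw [Complex.ofReal_tsum]; exact tsum_congr hterm
    _ = Complex.exp ((-s^2/c : ℝ)) * ∑' n : ℤ, Complex.exp (-π * a0 * (n:ℂ) ^ 2 + 2 * π * b0 * n) :=
        tsum_mul_left
    _ = Complex.exp ((-s^2/c : ℝ)) * (1 / a0 ^ (1/2 : ℂ)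
          * ∑' n : ℤ, Complex.exp (-π / a0 * ((n:ℂ) + I * b0) ^ 2)) := by rw [key]
    _ = ((Real.sqrt (π * c) : ℝ) : ℂ)
          * ∑' n : ℤ, (Complex.exp ((-s^2/c : ℝ)) * Complex.exp (-π / a0 * ((n:ℂ) + I * b0) ^ 2)) := by
        rw [hsqrt, tsum_mul_left]; ring
    _ = ((Real.sqrt (π * c) : ℝ) : ℂ) * ∑' n : ℤ, Complex.exp (-2 * Real.pi * Complex.I * n * s
          + 2 * t * s + c * (t - Real.pi * Complex.I * n) ^ 2) := by
        congr 1; exact tsum_congr hterm2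
end

section
/- Let φ, φ' ∈ ℝ, λ ∈ ℤ, and c > 0. If ∑_{m≥1} e^{-c m²} cos(2πm(λt + φ')) = ∑_{m≥1} e^{-c m²} cos(2πm(λt + φ)) for all t ∈ [0,1], then φ' ≡ φ (mod 1) or (if λ = 0) cos(2πmφ') = cos(2πmφ) for all m ≥ 1, which forces φ' ≡ ±φ (mod 1); in the case λ ≠ 0, equality of the two absolutely convergent trigonometric series for all t implies e^{2πiφ'} = e^{2πiφ}. -/
open Real intervalIntegral

lemma int_cos (N : ℤ) (θ : ℝ) :
    ∫ t in (0:ℝ)..1, Real.cos (2*π*N*t + θ) = if N = 0 then Real.cos θ else 0 := by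
  split_ifs with hN
  · simp [hN]
  · have hNr : (N:ℝ) ≠ 0 := Int.cast_ne_zero.mpr hN
    have h2 : (2*π*(N:ℝ)) ≠ 0 := by
      simp [Real.pi_ne_zero, hNr]
    have := intervalIntegral.integral_comp_mul_add (a := (0:ℝ)) (b := 1)
      (f := Real.cos) h2 θ
    rw [this, integral_cos]
    have : (2*π*(N:ℝ)) * 1 + θ = θ + N * (2*π) := by ring
    rw [this, Real.sin_add_int_mul_two_pi]
    simp

lemma int_sin (N : ℤ) (θ : ℝ) :
    ∫ t in (0:ℝ)..1, Real.sin (2*π*N*t + θ) = if N = 0 then Real.sin θ else 0 := by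
  split_ifs with hN
  · simp [hN]
  · have hNr : (N:ℝ) ≠ 0 := Int.cast_ne_zero.mpr hN
    have h2 : (2*π*(N:ℝ)) ≠ 0 := by
      simp [Real.pi_ne_zero, hNr]
    have := intervalIntegral.integral_comp_mul_add (a := (0:ℝ)) (b := 1)
      (f := Real.sin) h2 θ
    rw [this, integral_sin]
    have : (2*π*(N:ℝ)) * 1 + θ = θ + N * (2*π) := by ring
    rw [this, Real.cos_add_int_mul_two_pi]
    simp

lemma int_cc (lam : ℤ) (hl : lam ≠ 0) (φ : ℝ) (m : ℕ) :
    ∫ t in (0:ℝ)..1, Real.cos (2*π*((m:ℝ)+1)*((lam:ℝ)*t+φ)) * Real.cos (2*π*(lam:ℝ)*t)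
      = if m = 0 then Real.cos (2*π*((m:ℝ)+1)*φ)/2 else 0 := by
  have key : ∀ t : ℝ, Real.cos (2*π*((m:ℝ)+1)*((lam:ℝ)*t+φ)) * Real.cos (2*π*(lam:ℝ)*t)
      = (Real.cos (2*π*(((m:ℝ)+2)*(lam:ℝ))*t + 2*π*((m:ℝ)+1)*φ)
        + Real.cos (2*π*((m:ℝ)*(lam:ℝ))*t + 2*π*((m:ℝ)+1)*φ)) / 2 := by
    intro t
    rw [show 2*π*(((m:ℝ)+2)*(lam:ℝ))*t + 2*π*((m:ℝ)+1)*φ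
        = (2*π*((m:ℝ)+1)*((lam:ℝ)*t+φ)) + (2*π*(lam:ℝ)*t) by ring,
      show 2*π*((m:ℝ)*(lam:ℝ))*t + 2*π*((m:ℝ)+1)*φ
        = (2*π*((m:ℝ)+1)*((lam:ℝ)*t+φ)) - (2*π*(lam:ℝ)*t) by ring,
      Real.cos_add, Real.cos_sub]
    ring
  simp only [key]
  rw [intervalIntegral.integral_div, intervalIntegral.integral_add
    ((Continuous.intervalIntegrable (by fun_prop)) _ _)
    ((Continuous.intervalIntegrable (by fun_prop)) _ _)]
  have h1 := int_cos (((m:ℤ)+2)*lam) (2*π*((m:ℝ)+1)*φ)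
  have h2 := int_cos ((m:ℤ)*lam) (2*π*((m:ℝ)+1)*φ)
  push_cast at h1 h2
  rw [h1, h2]
  have hm2 : ¬ ((m:ℤ)+2)*lam = 0 := by
    simp [hl]
    omega
  rw [if_neg hm2]
  by_cases hm : m = 0
  · subst hm; norm_num
  · rw [if_neg (by simp [hl, hm]), if_neg hm]
    norm_num

lemma int_cs (lam : ℤ) (hl : lam ≠ 0) (φ : ℝ) (m : ℕ) :
    ∫ t in (0:ℝ)..1, Real.cos (2*π*((m:ℝ)+1)*((lam:ℝ)*t+φ)) * Real.sin (2*π*(lam:ℝ)*t)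
      = if m = 0 then -Real.sin (2*π*((m:ℝ)+1)*φ)/2 else 0 := by
  have key : ∀ t : ℝ, Real.cos (2*π*((m:ℝ)+1)*((lam:ℝ)*t+φ)) * Real.sin (2*π*(lam:ℝ)*t)
      = (Real.sin (2*π*(((m:ℝ)+2)*(lam:ℝ))*t + 2*π*((m:ℝ)+1)*φ)
        - Real.sin (2*π*((m:ℝ)*(lam:ℝ))*t + 2*π*((m:ℝ)+1)*φ)) / 2 := by
    intro t
    rw [show 2*π*(((m:ℝ)+2)*(lam:ℝ))*t + 2*π*((m:ℝ)+1)*φ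
        = (2*π*((m:ℝ)+1)*((lam:ℝ)*t+φ)) + (2*π*(lam:ℝ)*t) by ring,
      show 2*π*((m:ℝ)*(lam:ℝ))*t + 2*π*((m:ℝ)+1)*φ
        = (2*π*((m:ℝ)+1)*((lam:ℝ)*t+φ)) - (2*π*(lam:ℝ)*t) by ring,
      Real.sin_add, Real.sin_sub]
    ring
  simp only [key]
  rw [intervalIntegral.integral_div, intervalIntegral.integral_sub
    ((Continuous.intervalIntegrable (by fun_prop)) _ _)
    ((Continuous.intervalIntegrable (by fun_prop)) _ _)]
  have h1 := int_sin (((m:ℤ)+2)*lam) (2*π*((m:ℝ)+1)*φ)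
  have h2 := int_sin ((m:ℤ)*lam) (2*π*((m:ℝ)+1)*φ)
  push_cast at h1 h2
  rw [h1, h2]
  have hm2 : ¬ ((m:ℤ)+2)*lam = 0 := by
    simp [hl]
    omega
  rw [if_neg hm2]
  by_cases hm : m = 0
  · subst hm; norm_num
  · rw [if_neg (by simp [hl, hm]), if_neg hm]
    norm_num

lemma summable_a (c : ℝ) (hc : 0 < c) :
    Summable (fun m : ℕ => Real.exp (-c*((m:ℝ)+1)^2)) := by
  have hgeo : Summable (fun m : ℕ => Real.exp (-c) ^ m) :=
    summable_geometric_of_lt_one (Real.exp_nonneg _)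
      (Real.exp_lt_one_iff.mpr (by linarith))
  refine Summable.of_nonneg_of_le (fun m => (Real.exp_pos _).le) (fun m => ?_) hgeo
  rw [← Real.exp_nat_mul]
  apply Real.exp_le_exp.mpr
  nlinarith [sq_nonneg ((m:ℝ)), Nat.cast_nonneg (α := ℝ) m]

lemma swap_lem (c : ℝ) (hc : 0 < c) (φ : ℝ) (lam : ℤ) (w : C(ℝ, ℝ)) (hw : ∀ t, |w t| ≤ 1) :
    ∑' m : ℕ, ∫ t in (0:ℝ)..1,
        (Real.exp (-c*((m:ℝ)+1)^2) * Real.cos (2*π*((m:ℝ)+1)*((lam:ℝ)*t+φ))) * w t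
      = ∫ t in (0:ℝ)..1,
        (∑' m : ℕ, Real.exp (-c*((m:ℝ)+1)^2) * Real.cos (2*π*((m:ℝ)+1)*((lam:ℝ)*t+φ))) * w t := by
  set f : ℕ → C(ℝ, ℝ) := fun m =>
    ⟨fun t => (Real.exp (-c*((m:ℝ)+1)^2) * Real.cos (2*π*((m:ℝ)+1)*((lam:ℝ)*t+φ))) * w t,
      by exact ((continuous_const.mul (by fun_prop)).mul w.continuous)⟩
  have hsum : Summable fun m : ℕ =>
      ‖(f m).restrict (⟨Set.uIcc (0:ℝ) 1, isCompact_uIcc⟩ : TopologicalSpace.Compacts ℝ)‖ := by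
    refine Summable.of_nonneg_of_le (fun m => norm_nonneg _) (fun m => ?_) (summable_a c hc)
    rw [ContinuousMap.norm_le _ (Real.exp_pos _).le]
    rintro ⟨x, hx⟩
    simp only [ContinuousMap.restrict_apply, f, ContinuousMap.coe_mk, Real.norm_eq_abs,
      abs_mul]
    calc |Real.exp (-c*((m:ℝ)+1)^2)| * |Real.cos (2*π*((m:ℝ)+1)*((lam:ℝ)*x+φ))| * |w x|
        ≤ Real.exp (-c*((m:ℝ)+1)^2) * 1 * 1 := by
          rw [abs_of_pos (Real.exp_pos _)]
          gcongr
          · exact Real.abs_cos_le_one _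
          · exact hw x
      _ = Real.exp (-c*((m:ℝ)+1)^2) := by ring
  have hswap := intervalIntegral.tsum_intervalIntegral_eq_of_summable_norm
    (a := (0:ℝ)) (b := 1) hsum
  simp only [f, ContinuousMap.coe_mk] at hswap
  rw [hswap]
  congr 1
  funext x
  exact tsum_mul_right

/-- Rigidity from equality of trigonometric series: if the absolutely convergent series
`∑_{m≥1} e^{-cm²} cos(2πm(λt+φ'))` and `∑_{m≥1} e^{-cm²} cos(2πm(λt+φ))` agree for all
`t ∈ [0,1]`, then: when `λ ≠ 0`, `e^{2πiφ'} = e^{2πiφ}`; when `λ = 0`, the condition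
`cos(2πmφ') = cos(2πmφ)` for all `m ≥ 1` forces `φ' ≡ ±φ (mod 1)`. -/
theorem trigonometric_series_rigidity
    (c : ℝ) (hc : 0 < c) (φ φ' : ℝ) (lam : ℤ)
    (h : ∀ t ∈ Set.Icc (0 : ℝ) 1,
      ∑' m : ℕ, Real.exp (-c * ((m : ℝ) + 1) ^ 2) *
          Real.cos (2 * Real.pi * ((m : ℝ) + 1) * ((lam : ℝ) * t + φ'))
        = ∑' m : ℕ, Real.exp (-c * ((m : ℝ) + 1) ^ 2) *
          Real.cos (2 * Real.pi * ((m : ℝ) + 1) * ((lam : ℝ) * t + φ))) :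
    (lam ≠ 0 →
      Complex.exp (2 * Real.pi * Complex.I * φ') = Complex.exp (2 * Real.pi * Complex.I * φ)) ∧
    ((∀ m : ℕ, 1 ≤ m → Real.cos (2 * Real.pi * (m : ℝ) * φ') = Real.cos (2 * Real.pi * (m : ℝ) * φ)) →
      (Complex.exp (2 * Real.pi * Complex.I * φ') = Complex.exp (2 * Real.pi * Complex.I * φ) ∨
       Complex.exp (2 * Real.pi * Complex.I * φ') = Complex.exp (-(2 * Real.pi * Complex.I * φ)))) := by
  constructor
  · -- λ ≠ 0 case
    intro hl
    -- the two weight functions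
    set wc : C(ℝ, ℝ) := ⟨fun t => Real.cos (2*π*(lam:ℝ)*t), by fun_prop⟩ with hwc
    set ws : C(ℝ, ℝ) := ⟨fun t => Real.sin (2*π*(lam:ℝ)*t), by fun_prop⟩ with hws
    have hwcb : ∀ t, |wc t| ≤ 1 := fun t => Real.abs_cos_le_one _
    have hwsb : ∀ t, |ws t| ≤ 1 := fun t => Real.abs_sin_le_one _
    have hmid : ∀ w : C(ℝ, ℝ),
        (∫ t in (0:ℝ)..1,
          (∑' m : ℕ, Real.exp (-c*((m:ℝ)+1)^2) * Real.cos (2*π*((m:ℝ)+1)*((lam:ℝ)*t+φ'))) * w t)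
        = ∫ t in (0:ℝ)..1,
          (∑' m : ℕ, Real.exp (-c*((m:ℝ)+1)^2) * Real.cos (2*π*((m:ℝ)+1)*((lam:ℝ)*t+φ))) * w t := by
      intro w
      apply intervalIntegral.integral_congr
      intro t ht
      rw [Set.uIcc_of_le (zero_le_one)] at ht
      simp only [h t ht]
    -- evaluate term-wise integrals
    have hterm : ∀ (ψ : ℝ) (m : ℕ) (w : ℝ → ℝ),
        (∫ t in (0:ℝ)..1,
          (Real.exp (-c*((m:ℝ)+1)^2) * Real.cos (2*π*((m:ℝ)+1)*((lam:ℝ)*t+ψ))) * w t)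
        = Real.exp (-c*((m:ℝ)+1)^2) *
            ∫ t in (0:ℝ)..1, Real.cos (2*π*((m:ℝ)+1)*((lam:ℝ)*t+ψ)) * w t := by
      intro ψ m w
      simp only [mul_assoc]
      rw [intervalIntegral.integral_const_mul]
    have hcosval : ∀ ψ : ℝ,
        (∑' m : ℕ, ∫ t in (0:ℝ)..1,
          (Real.exp (-c*((m:ℝ)+1)^2) * Real.cos (2*π*((m:ℝ)+1)*((lam:ℝ)*t+ψ))) * wc t)
        = Real.exp (-c) * (Real.cos (2*π*ψ)/2) := by
      intro ψ
      have : ∀ m : ℕ, (∫ t in (0:ℝ)..1,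
          (Real.exp (-c*((m:ℝ)+1)^2) * Real.cos (2*π*((m:ℝ)+1)*((lam:ℝ)*t+ψ))) * wc t)
          = Real.exp (-c*((m:ℝ)+1)^2) * (if m = 0 then Real.cos (2*π*((m:ℝ)+1)*ψ)/2 else 0) := by
        intro m
        rw [hterm ψ m wc]
        congr 1
        exact int_cc lam hl ψ m
      rw [tsum_eq_single 0 (by intro m hm; rw [this m, if_neg hm, mul_zero])]
      rw [this 0]
      norm_num
    have hsinval : ∀ ψ : ℝ,
        (∑' m : ℕ, ∫ t in (0:ℝ)..1,
          (Real.exp (-c*((m:ℝ)+1)^2) * Real.cos (2*π*((m:ℝ)+1)*((lam:ℝ)*t+ψ))) * ws t)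
        = Real.exp (-c) * (-Real.sin (2*π*ψ)/2) := by
      intro ψ
      have : ∀ m : ℕ, (∫ t in (0:ℝ)..1,
          (Real.exp (-c*((m:ℝ)+1)^2) * Real.cos (2*π*((m:ℝ)+1)*((lam:ℝ)*t+ψ))) * ws t)
          = Real.exp (-c*((m:ℝ)+1)^2) * (if m = 0 then -Real.sin (2*π*((m:ℝ)+1)*ψ)/2 else 0) := by
        intro m
        rw [hterm ψ m ws]
        congr 1
        exact int_cs lam hl ψ m
      rw [tsum_eq_single 0 (by intro m hm; rw [this m, if_neg hm, mul_zero])]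
      rw [this 0]
      norm_num
    have hcchain := (swap_lem c hc φ' lam wc hwcb).trans
      ((hmid wc).trans (swap_lem c hc φ lam wc hwcb).symm)
    have hschain := (swap_lem c hc φ' lam ws hwsb).trans
      ((hmid ws).trans (swap_lem c hc φ lam ws hwsb).symm)
    rw [hcosval φ', hcosval φ] at hcchain
    rw [hsinval φ', hsinval φ] at hschain
    have hexp : Real.exp (-c) ≠ 0 := (Real.exp_pos _).ne'
    have hcos : Real.cos (2*π*φ') = Real.cos (2*π*φ) := by
      have := mul_left_cancel₀ hexp hcchain
      linarith
    have hsin : Real.sin (2*π*φ') = Real.sin (2*π*φ) := by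
      have := mul_left_cancel₀ hexp hschain
      linarith
    rw [show (2*(π:ℂ)*Complex.I*(φ':ℂ)) = ((2*π*φ' : ℝ):ℂ) * Complex.I by push_cast; ring,
      show (2*(π:ℂ)*Complex.I*(φ:ℂ)) = ((2*π*φ : ℝ):ℂ) * Complex.I by push_cast; ring,
      Complex.exp_mul_I, Complex.exp_mul_I, ← Complex.ofReal_cos, ← Complex.ofReal_cos,
      ← Complex.ofReal_sin, ← Complex.ofReal_sin, hcos, hsin]
  · -- λ = 0 case
    intro hall
    have h1 := hall 1 le_rfl
    norm_num at h1
    obtain ⟨k, hk | hk⟩ := Real.cos_eq_cos_iff.mp h1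
    · left
      rw [Complex.exp_eq_exp_iff_exists_int]
      refine ⟨-k, ?_⟩
      have hk' := congrArg (Complex.ofReal) hk
      push_cast at hk' ⊢
      linear_combination (-Complex.I) * hk'
    · right
      rw [Complex.exp_eq_exp_iff_exists_int]
      refine ⟨k, ?_⟩
      have hk' := congrArg (Complex.ofReal) hk
      push_cast at hk' ⊢
      linear_combination Complex.I * hk'
end
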